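/- Let μ₁, μ₂, ν₁, ν₂, λ, F₂, F₃ be real numbers such that either F₂ = 0, or F₂ ≠ 0 and λ = −1. Let x₁, x₂, x₃ be nonzero real numbers with 1 − F₂x₂ ≠ 0, x₂ + F₂ ≠ 0, 1 − F₃x₃ ≠ 0 and x₃ + F₃ ≠ 0, and set y₂ = (x₂ + F₂)/(1 − F₂x₂) and y₃ = (x₃ + F₃)/(1 − F₃x₃). Assume (x₂ + λ/x₂)·(x₁ + μ₁/x₁) = ν₁ and (y₂ + λ/y₂)·(y₃ + μ₂/y₃) = ν₂, and assume (1 − F₂²)·x₁² − F₂ν₁·x₁ + μ₁·(1 − F₂²) ≠ 0. Then ((4F₂·x₁² + ν₁(1 − F₂²)·x₁ + 4F₂μ₁)/((1 − F₂²)·x₁² − F₂ν₁·x₁ + μ₁(1 − F₂²)))·(y₃ + μ₂/y₃) = ν₂. -/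
import Mathlib


/-- Quotient-space equation of an involutive coupling of two elliptic orthodiagonal
spherical quadrilaterals (elliptic–elliptic case). -/
theorem stmt_4 (μ₁ μ₂ ν₁ ν₂ lam F₂ F₃ : ℝ)
    (hinv : F₂ = 0 ∨ (F₂ ≠ 0 ∧ lam = -1))
    (x₁ x₂ x₃ : ℝ) (hx₁ : x₁ ≠ 0) (hx₂ : x₂ ≠ 0) (hx₃ : x₃ ≠ 0)
    (h2 : 1 - F₂ * x₂ ≠ 0) (h2' : x₂ + F₂ ≠ 0)
    (h3 : 1 - F₃ * x₃ ≠ 0) (h3' : x₃ + F₃ ≠ 0)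
    (y₂ y₃ : ℝ)
    (hy₂ : y₂ = (x₂ + F₂) / (1 - F₂ * x₂))
    (hy₃ : y₃ = (x₃ + F₃) / (1 - F₃ * x₃))
    (heq₁ : (x₂ + lam / x₂) * (x₁ + μ₁ / x₁) = ν₁)
    (heq₂ : (y₂ + lam / y₂) * (y₃ + μ₂ / y₃) = ν₂)
    (hden : (1 - F₂ ^ 2) * x₁ ^ 2 - F₂ * ν₁ * x₁ + μ₁ * (1 - F₂ ^ 2) ≠ 0) :
    ((4 * F₂ * x₁ ^ 2 + ν₁ * (1 - F₂ ^ 2) * x₁ + 4 * F₂ * μ₁) /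
        ((1 - F₂ ^ 2) * x₁ ^ 2 - F₂ * ν₁ * x₁ + μ₁ * (1 - F₂ ^ 2))) *
      (y₃ + μ₂ / y₃) = ν₂ := by
  have hν : ν₁ * (x₂ * x₁) = (x₂ ^ 2 + lam) * (x₁ ^ 2 + μ₁) := by
    field_simp at heq₁
    linear_combination -heq₁
  have key : (4 * F₂ * x₁ ^ 2 + ν₁ * (1 - F₂ ^ 2) * x₁ + 4 * F₂ * μ₁) /
      ((1 - F₂ ^ 2) * x₁ ^ 2 - F₂ * ν₁ * x₁ + μ₁ * (1 - F₂ ^ 2)) = y₂ + lam / y₂ := by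
    subst hy₂
    rw [div_eq_iff hden]
    rcases hinv with h | ⟨hF, hlam⟩
    · subst h
      field_simp
      linear_combination hν
    · subst hlam
      field_simp
      linear_combination (1 + F₂ ^ 2) ^ 2 * hν
  rw [key]
  exact heq₂
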